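/- There exists a universal constant C > 0 such that for all d ≥ 1, all θ ∈ S^{d−1}, all b ∈ ℝ and all σ ∈ (0,1], the function u(t) = d/dt ( e^{−σ²t²/2 − itb} ∏_{i=1}^d cos(tθ_i) sin(2tθ_i) ) satisfies sup_{t∈ℝ} |u'(t)| ≤ C κ^d ( d² + d|b| + b² ) and sup_{t∈ℝ} |t·u(t)| ≤ C κ^d (d + |b|)/σ. -/

import Mathlib

set_option linter.unusedSectionVars false

noncomputable section

/-- `κ = sup_{t ∈ ℝ} |cos t · sin 2t| = 0.7698…` -/
def kappa : ℝ := ⨆ t : ℝ, |Real.cos t * Real.sin (2 * t)|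

/-- The auxiliary function
`u(t) = d/dt ( e^{−σ²t²/2 − itb} ∏_{i=1}^d cos(tθ_i) sin(2tθ_i) )`. -/
def uAux (d : ℕ) (θ : EuclideanSpace ℝ (Fin d)) (b σ : ℝ) (t : ℝ) : ℂ :=
  deriv (fun s : ℝ =>
    Complex.exp (-((σ ^ 2 * s ^ 2 / 2 : ℝ) : ℂ) - Complex.I * s * b) *
      ∏ i, ((Real.cos (s * θ i) * Real.sin (2 * s * θ i) : ℝ) : ℂ)) t

namespace SBU
open Real Finset




def pf (x : ℝ) : ℝ := Real.cos x * Real.sin (2 * x)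
def pf1 (x : ℝ) : ℝ := -Real.sin x * Real.sin (2 * x) + Real.cos x * (Real.cos (2 * x) * 2)
def pf2 (x : ℝ) : ℝ := -5 * (Real.cos x * Real.sin (2 * x)) - 4 * (Real.sin x * Real.cos (2 * x))

lemma hasDerivAt_sin2 (x : ℝ) : HasDerivAt (fun y : ℝ => Real.sin (2 * y)) (Real.cos (2 * x) * 2) x := by
  simpa [Function.comp_def] using (Real.hasDerivAt_sin (2 * x)).comp x ((hasDerivAt_id x).const_mul 2)

lemma hasDerivAt_cos2 (x : ℝ) : HasDerivAt (fun y : ℝ => Real.cos (2 * y)) (-Real.sin (2 * x) * 2) x := by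
  simpa [Function.comp_def] using (Real.hasDerivAt_cos (2 * x)).comp x ((hasDerivAt_id x).const_mul 2)

lemma hasDerivAt_pf (x : ℝ) : HasDerivAt pf (pf1 x) x :=
  (Real.hasDerivAt_cos x).mul (hasDerivAt_sin2 x)

lemma hasDerivAt_pf1 (x : ℝ) : HasDerivAt pf1 (pf2 x) x := by
  have h := (((Real.hasDerivAt_sin x).neg).mul (hasDerivAt_sin2 x)).add
    ((Real.hasDerivAt_cos x).mul ((hasDerivAt_cos2 x).mul_const 2))
  have e : pf2 x = -Real.cos x * Real.sin (2 * x) + -Real.sin x * (Real.cos (2 * x) * 2) +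
      (-Real.sin x * (Real.cos (2 * x) * 2) + Real.cos x * (-Real.sin (2 * x) * 2 * 2)) := by
    unfold pf2; ring
  rw [e]; exact h

lemma abs_pf1_le (x : ℝ) : |pf1 x| ≤ 3 := by
  unfold pf1
  rw [abs_le]
  constructor <;>
  nlinarith [Real.neg_one_le_cos x, Real.cos_le_one x, Real.neg_one_le_sin (2*x),
    Real.sin_le_one (2*x), Real.neg_one_le_sin x, Real.sin_le_one x,
    Real.neg_one_le_cos (2*x), Real.cos_le_one (2*x),
    sq_nonneg (Real.sin x + Real.sin (2*x)), sq_nonneg (Real.sin x - Real.sin (2*x)),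
    sq_nonneg (Real.cos x + Real.cos (2*x)), sq_nonneg (Real.cos x - Real.cos (2*x))]

lemma abs_pf2_le (x : ℝ) : |pf2 x| ≤ 9 := by
  unfold pf2
  rw [abs_le]
  constructor <;>
  nlinarith [Real.neg_one_le_cos x, Real.cos_le_one x, Real.neg_one_le_sin (2*x),
    Real.sin_le_one (2*x), Real.neg_one_le_sin x, Real.sin_le_one x,
    Real.neg_one_le_cos (2*x), Real.cos_le_one (2*x),
    sq_nonneg (Real.sin x + Real.cos (2*x)), sq_nonneg (Real.sin x - Real.cos (2*x)),
    sq_nonneg (Real.cos x + Real.sin (2*x)), sq_nonneg (Real.cos x - Real.sin (2*x))]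

lemma kappa_bddAbove : BddAbove (Set.range fun t : ℝ => |Real.cos t * Real.sin (2 * t)|) := by
  refine ⟨1, ?_⟩
  rintro x ⟨t, rfl⟩
  dsimp only
  rw [abs_mul]
  have h3 := Real.abs_cos_le_one t
  have h2 := Real.abs_sin_le_one (2 * t)
  nlinarith [abs_nonneg (Real.cos t), abs_nonneg (Real.sin (2*t))]

lemma abs_pf_le_kappa (x : ℝ) : |pf x| ≤ kappa :=
  le_ciSup kappa_bddAbove x

lemma kappa_le_one : kappa ≤ 1 := by
  apply ciSup_le
  intro t
  rw [abs_mul]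
  have h3 := Real.abs_cos_le_one t
  have h2 := Real.abs_sin_le_one (2 * t)
  nlinarith [abs_nonneg (Real.cos t), abs_nonneg (Real.sin (2*t))]

lemma kappa_pos : 0 < kappa := by
  have h1 : Real.cos 1 > 0 := Real.cos_pos_of_mem_Ioo (by constructor <;> nlinarith [Real.pi_gt_three])
  have h2 : Real.sin 2 > 0 := Real.sin_pos_of_pos_of_lt_pi (by norm_num) (by nlinarith [Real.pi_gt_three])
  have : (0:ℝ) < |Real.cos 1 * Real.sin (2 * 1)| := by
    rw [abs_mul, mul_one]; positivity
  exact lt_of_lt_of_le this (le_ciSup kappa_bddAbove 1)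

lemma aux_xexp (x : ℝ) (hx : 0 ≤ x) : x * Real.exp (-(x ^ 2 / 2)) ≤ 1 := by
  have h := Real.add_one_le_exp (x ^ 2 / 2)
  rw [Real.exp_neg, ← div_eq_mul_inv, div_le_one (Real.exp_pos _)]
  nlinarith

lemma aux_x2exp (x : ℝ) : x ^ 2 * Real.exp (-(x ^ 2 / 2)) ≤ 2 := by
  have h := Real.add_one_le_exp (x ^ 2 / 2)
  rw [Real.exp_neg, ← div_eq_mul_inv, div_le_iff₀ (Real.exp_pos _)]
  nlinarith





-- Gaussian-type factor
def gC (b σ : ℝ) (s : ℝ) : ℂ :=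
  Complex.exp (-((σ ^ 2 * s ^ 2 / 2 : ℝ) : ℂ) - Complex.I * s * b)

def gA (b σ : ℝ) (s : ℝ) : ℂ := -((σ ^ 2 * s : ℝ) : ℂ) - Complex.I * b

def gC1 (b σ : ℝ) (s : ℝ) : ℂ := gA b σ s * gC b σ s

def gC2 (b σ : ℝ) (s : ℝ) : ℂ := (-((σ ^ 2 : ℝ) : ℂ) + gA b σ s ^ 2) * gC b σ s

lemma hasDerivAt_inner (b σ : ℝ) (s : ℝ) :
    HasDerivAt (fun s : ℝ => -((σ ^ 2 * s ^ 2 / 2 : ℝ) : ℂ) - Complex.I * s * b)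
      (gA b σ s) s := by
  have h1 : HasDerivAt (fun s : ℝ => (σ ^ 2 * s ^ 2 / 2 : ℝ)) (σ ^ 2 * s) s := by
    have := ((hasDerivAt_pow 2 s).const_mul (σ ^ 2)).div_const 2
    rw [show σ ^ 2 * s = σ ^ 2 * ((2:ℕ) * s ^ (2 - 1)) / 2 by norm_num; ring]; exact this
  have h2 : HasDerivAt (fun s : ℝ => ((σ ^ 2 * s ^ 2 / 2 : ℝ) : ℂ)) ((σ ^ 2 * s : ℝ) : ℂ) s :=
    h1.ofReal_comp
  have h3 : HasDerivAt (fun s : ℝ => Complex.I * (s : ℝ) * b) (Complex.I * b) s := by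
    have hid : HasDerivAt (fun s : ℝ => ((s : ℝ) : ℂ)) ((1 : ℝ) : ℂ) s :=
      (hasDerivAt_id s).ofReal_comp
    have := (hid.const_mul Complex.I).mul_const (b : ℂ)
    simpa using this
  simpa [gA] using h2.fun_neg.fun_sub h3

lemma hasDerivAt_gC (b σ : ℝ) (s : ℝ) : HasDerivAt (gC b σ) (gC1 b σ s) s := by
  have h := (hasDerivAt_inner b σ s).cexp
  rw [show gC1 b σ s = gC b σ s * gA b σ s from by unfold gC1; ring]
  exact h

lemma hasDerivAt_gA (b σ : ℝ) (s : ℝ) : HasDerivAt (gA b σ) (-((σ ^ 2 : ℝ) : ℂ)) s := by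
  have h1 : HasDerivAt (fun s : ℝ => (σ ^ 2 * s : ℝ)) (σ ^ 2) s := by
    simpa using (hasDerivAt_id s).const_mul (σ ^ 2)
  exact (h1.ofReal_comp).neg.sub_const (Complex.I * (b : ℂ))

lemma hasDerivAt_gC1 (b σ : ℝ) (s : ℝ) : HasDerivAt (gC1 b σ) (gC2 b σ s) s := by
  have h := (hasDerivAt_gA b σ s).mul (hasDerivAt_gC b σ s)
  have e : gC2 b σ s = -((σ ^ 2 : ℝ) : ℂ) * gC b σ s + gA b σ s * gC1 b σ s := by
    unfold gC2 gC1; ring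
  rw [e]; exact h

-- Product factor
variable {d : ℕ}

def cC (θ : Fin d → ℝ) (i : Fin d) (s : ℝ) : ℂ := ((pf (s * θ i) : ℝ) : ℂ)
def cC1 (θ : Fin d → ℝ) (i : Fin d) (s : ℝ) : ℂ := ((pf1 (s * θ i) * θ i : ℝ) : ℂ)

lemma hasDerivAt_cC (θ : Fin d → ℝ) (i : Fin d) (s : ℝ) :
    HasDerivAt (cC θ i) (cC1 θ i s) s := by
  have h : HasDerivAt (fun s : ℝ => pf (s * θ i)) (pf1 (s * θ i) * θ i) s := by
    simpa [Function.comp_def] using (hasDerivAt_pf (s * θ i)).comp s (hasDerivAt_mul_const (θ i))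
  exact h.ofReal_comp

def PC (θ : Fin d → ℝ) (s : ℝ) : ℂ := ∏ i, cC θ i s

def PC1 (θ : Fin d → ℝ) (s : ℝ) : ℂ :=
  ∑ i, (∏ j ∈ Finset.univ.erase i, cC θ j s) * cC1 θ i s

lemma hasDerivAt_PC (θ : Fin d → ℝ) (s : ℝ) : HasDerivAt (PC θ) (PC1 θ s) s := by
  have h := HasDerivAt.fun_finsetProd (u := Finset.univ) (f := fun i => cC θ i)
    (f' := fun i => cC1 θ i s) (x := s) (fun i _ => hasDerivAt_cC θ i s)
  simp only [smul_eq_mul] at h; exact h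



def cC2 (θ : Fin d → ℝ) (i : Fin d) (s : ℝ) : ℂ := ((pf2 (s * θ i) * θ i * θ i : ℝ) : ℂ)

lemma hasDerivAt_cC1 (θ : Fin d → ℝ) (i : Fin d) (s : ℝ) :
    HasDerivAt (cC1 θ i) (cC2 θ i s) s := by
  have h : HasDerivAt (fun s : ℝ => pf1 (s * θ i)) (pf2 (s * θ i) * θ i) s := by
    simpa [Function.comp_def] using (hasDerivAt_pf1 (s * θ i)).comp s (hasDerivAt_mul_const (θ i))
  exact (h.mul_const (θ i)).ofReal_comp

def QC (θ : Fin d → ℝ) (u : Finset (Fin d)) (s : ℝ) : ℂ := ∏ j ∈ u, cC θ j s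
def QC1 (θ : Fin d → ℝ) (u : Finset (Fin d)) (s : ℝ) : ℂ :=
  ∑ j ∈ u, (∏ k ∈ u.erase j, cC θ k s) * cC1 θ j s

lemma hasDerivAt_QC (θ : Fin d → ℝ) (u : Finset (Fin d)) (s : ℝ) :
    HasDerivAt (QC θ u) (QC1 θ u s) s := by
  have h := HasDerivAt.fun_finsetProd (u := u) (f := fun i => cC θ i)
    (f' := fun i => cC1 θ i s) (x := s) (fun i _ => hasDerivAt_cC θ i s)
  simp only [smul_eq_mul] at h; exact h

def PC2 (θ : Fin d → ℝ) (s : ℝ) : ℂ :=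
  ∑ i, (QC1 θ (Finset.univ.erase i) s * cC1 θ i s +
        QC θ (Finset.univ.erase i) s * cC2 θ i s)

lemma hasDerivAt_PC1 (θ : Fin d → ℝ) (s : ℝ) : HasDerivAt (PC1 θ) (PC2 θ s) s := by
  have h : ∀ i : Fin d, HasDerivAt (fun y => (∏ j ∈ Finset.univ.erase i, cC θ j y) * cC1 θ i y)
      (QC1 θ (Finset.univ.erase i) s * cC1 θ i s + QC θ (Finset.univ.erase i) s * cC2 θ i s) s :=
    fun i => (hasDerivAt_QC θ (Finset.univ.erase i) s).mul (hasDerivAt_cC1 θ i s)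
  exact HasDerivAt.fun_sum (fun i _ => h i)



lemma norm_gC (b σ s : ℝ) : ‖gC b σ s‖ = Real.exp (-(σ ^ 2 * s ^ 2 / 2)) := by
  unfold gC
  rw [Complex.norm_exp]
  congr 1
  rw [Complex.sub_re, Complex.neg_re, Complex.ofReal_re]
  simp [Complex.mul_re, Complex.I_re, Complex.I_im, Complex.ofReal_re, Complex.ofReal_im]

lemma norm_gA_le (b σ s : ℝ) : ‖gA b σ s‖ ≤ σ ^ 2 * |s| + |b| := by
  unfold gA
  refine (norm_sub_le _ _).trans ?_
  rw [norm_neg, Complex.norm_real, Real.norm_eq_abs, norm_mul,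
    Complex.norm_I, Complex.norm_real, one_mul, Real.norm_eq_abs, abs_mul,
    abs_of_nonneg (by positivity : (0:ℝ) ≤ σ ^ 2)]

section gbounds
variable {b σ : ℝ} (hσ0 : 0 < σ) (hσ1 : σ ≤ 1)
include hσ0 hσ1

omit hσ0 hσ1 in
lemma exp_eq (s : ℝ) : Real.exp (-(σ ^ 2 * s ^ 2 / 2)) = Real.exp (-((σ * |s|) ^ 2 / 2)) := by
  congr 1
  rw [mul_pow, sq_abs]

omit hσ0 hσ1 in
lemma norm_gC_le_one (s : ℝ) : ‖gC b σ s‖ ≤ 1 := by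
  rw [norm_gC]
  apply Real.exp_le_one_iff.mpr  -- maybe wrong name
  nlinarith [sq_nonneg (σ * s)]

lemma norm_gC1_le (s : ℝ) : ‖gC1 b σ s‖ ≤ 1 + |b| := by
  have h1 : ‖gC1 b σ s‖ ≤ (σ ^ 2 * |s| + |b|) * Real.exp (-((σ * |s|) ^ 2 / 2)) := by
    unfold gC1
    rw [norm_mul, norm_gC, exp_eq]
    exact mul_le_mul_of_nonneg_right (norm_gA_le b σ s) (Real.exp_pos _).le
  have h2 := aux_xexp (σ * |s|) (by positivity)
  have h3 : Real.exp (-((σ * |s|) ^ 2 / 2)) ≤ 1 := by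
    apply Real.exp_le_one_iff.mpr
    nlinarith [sq_nonneg (σ * |s|)]
  have hE := (Real.exp_pos (-((σ * |s|) ^ 2 / 2))).le
  nlinarith [abs_nonneg b, abs_nonneg s, mul_nonneg (abs_nonneg s) hE,
    mul_le_mul_of_nonneg_left h3 (abs_nonneg b)]

lemma norm_gC2_le (s : ℝ) : ‖gC2 b σ s‖ ≤ 5 + 2 * b ^ 2 := by
  have hA := norm_gA_le b σ s
  have hAnn := norm_nonneg (gA b σ s)
  have h1 : ‖gC2 b σ s‖ ≤ (σ ^ 2 + ‖gA b σ s‖ ^ 2) * Real.exp (-((σ * |s|) ^ 2 / 2)) := by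
    unfold gC2
    rw [norm_mul, norm_gC, exp_eq]
    apply mul_le_mul_of_nonneg_right _ (Real.exp_pos _).le
    refine (norm_add_le _ _).trans ?_
    rw [norm_neg, norm_pow, Complex.norm_real, Real.norm_eq_abs, abs_of_nonneg (by positivity : (0:ℝ) ≤ σ ^ 2)]
  have h2 := aux_x2exp (σ * |s|)
  have h3 : Real.exp (-((σ * |s|) ^ 2 / 2)) ≤ 1 := by
    apply Real.exp_le_one_iff.mpr
    nlinarith [sq_nonneg (σ * |s|)]
  have hE := (Real.exp_pos (-((σ * |s|) ^ 2 / 2))).le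
  have hA2 : ‖gA b σ s‖ ^ 2 ≤ 2 * (σ ^ 2 * |s|) ^ 2 + 2 * b ^ 2 := by
    nlinarith [sq_nonneg (σ ^ 2 * |s| - |b|), sq_abs b]
  have key : (σ ^ 2 * |s|) ^ 2 * Real.exp (-((σ * |s|) ^ 2 / 2)) ≤ 2 := by
    have : (σ ^ 2 * |s|) ^ 2 = σ ^ 2 * (σ * |s|) ^ 2 := by ring
    rw [this]
    calc σ ^ 2 * (σ * |s|) ^ 2 * Real.exp (-((σ * |s|) ^ 2 / 2))
        = σ ^ 2 * ((σ * |s|) ^ 2 * Real.exp (-((σ * |s|) ^ 2 / 2))) := by ring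
      _ ≤ 1 * 2 := by
          apply mul_le_mul _ h2 (by positivity) (by norm_num)
          nlinarith
      _ = 2 := by norm_num
  nlinarith [sq_nonneg b, mul_nonneg (mul_nonneg hAnn hAnn) hE,
    mul_le_mul_of_nonneg_right hA2 hE, sq_nonneg (σ * |s|),
    mul_le_mul_of_nonneg_left h3 (sq_nonneg b)]

lemma norm_t_gC_le (t : ℝ) : |t| * ‖gC b σ t‖ ≤ 1 / σ := by
  rw [norm_gC, exp_eq, le_div_iff₀ hσ0]
  have h := aux_xexp (σ * |t|) (by positivity)
  calc |t| * Real.exp (-((σ * |t|) ^ 2 / 2)) * σ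
      = (σ * |t|) * Real.exp (-((σ * |t|) ^ 2 / 2)) := by ring
    _ ≤ 1 := h

lemma norm_t_gC1_le (t : ℝ) : |t| * ‖gC1 b σ t‖ ≤ 2 + |b| / σ := by
  have h1 : ‖gC1 b σ t‖ ≤ (σ ^ 2 * |t| + |b|) * Real.exp (-((σ * |t|) ^ 2 / 2)) := by
    unfold gC1
    rw [norm_mul, norm_gC, exp_eq]
    exact mul_le_mul_of_nonneg_right (norm_gA_le b σ t) (Real.exp_pos _).le
  have h2 := aux_x2exp (σ * |t|)
  have h3 := aux_xexp (σ * |t|) (by positivity)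
  have hE := (Real.exp_pos (-((σ * |t|) ^ 2 / 2))).le
  have key1 : |t| * (σ ^ 2 * |t|) * Real.exp (-((σ * |t|) ^ 2 / 2)) ≤ 2 := by
    calc |t| * (σ ^ 2 * |t|) * Real.exp (-((σ * |t|) ^ 2 / 2))
        = (σ * |t|) ^ 2 * Real.exp (-((σ * |t|) ^ 2 / 2)) := by ring
      _ ≤ 2 := h2
  have key2 : |t| * |b| * Real.exp (-((σ * |t|) ^ 2 / 2)) ≤ |b| / σ := by
    rw [le_div_iff₀ hσ0]
    calc |t| * |b| * Real.exp (-((σ * |t|) ^ 2 / 2)) * σ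
        = |b| * ((σ * |t|) * Real.exp (-((σ * |t|) ^ 2 / 2))) := by ring
      _ ≤ |b| * 1 := mul_le_mul_of_nonneg_left h3 (abs_nonneg b)
      _ = |b| := by ring
  calc |t| * ‖gC1 b σ t‖ ≤ |t| * ((σ ^ 2 * |t| + |b|) * Real.exp (-((σ * |t|) ^ 2 / 2))) :=
        mul_le_mul_of_nonneg_left h1 (abs_nonneg t)
    _ = |t| * (σ ^ 2 * |t|) * Real.exp (-((σ * |t|) ^ 2 / 2))
        + |t| * |b| * Real.exp (-((σ * |t|) ^ 2 / 2)) := by ring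
    _ ≤ 2 + |b| / σ := add_le_add key1 key2

end gbounds


section prodbounds
variable {d : ℕ} {θ : Fin d → ℝ} (hθ : ∀ i, |θ i| ≤ 1)
include hθ

omit hθ in
lemma norm_cC_le (i : Fin d) (s : ℝ) : ‖cC θ i s‖ ≤ kappa := by
  unfold cC
  rw [Complex.norm_real, Real.norm_eq_abs]
  exact abs_pf_le_kappa _

lemma norm_cC1_le (i : Fin d) (s : ℝ) : ‖cC1 θ i s‖ ≤ 3 := by
  unfold cC1
  rw [Complex.norm_real, Real.norm_eq_abs, abs_mul]
  have h1 := abs_pf1_le (s * θ i)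
  have h2 := hθ i
  nlinarith [abs_nonneg (pf1 (s * θ i)), abs_nonneg (θ i)]

lemma norm_cC2_le (i : Fin d) (s : ℝ) : ‖cC2 θ i s‖ ≤ 9 := by
  unfold cC2
  rw [Complex.norm_real, Real.norm_eq_abs, abs_mul, abs_mul]
  have h1 := abs_pf2_le (s * θ i)
  have h2 := hθ i
  nlinarith [abs_nonneg (pf2 (s * θ i)), abs_nonneg (θ i),
    mul_nonneg (abs_nonneg (pf2 (s * θ i))) (abs_nonneg (θ i))]

omit hθ in
lemma norm_QC_le (u : Finset (Fin d)) (s : ℝ) : ‖QC θ u s‖ ≤ kappa ^ u.card := by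
  unfold QC
  refine le_trans (Finset.norm_prod_le _ _) ?_
  calc ∏ j ∈ u, ‖cC θ j s‖ ≤ ∏ j ∈ u, kappa :=
        Finset.prod_le_prod (fun j _ => norm_nonneg _) (fun j _ => norm_cC_le j s)
    _ = kappa ^ u.card := Finset.prod_const kappa

lemma norm_QC1_le (u : Finset (Fin d)) (s : ℝ) :
    ‖QC1 θ u s‖ ≤ u.card * (3 * kappa ^ (u.card - 1)) := by
  unfold QC1
  refine (norm_sum_le _ _).trans ?_
  have hterm : ∀ j ∈ u, ‖(∏ k ∈ u.erase j, cC θ k s) * cC1 θ j s‖ ≤ 3 * kappa ^ (u.card - 1) := by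
    intro j hj
    rw [norm_mul, mul_comm]
    have h1 : ‖∏ k ∈ u.erase j, cC θ k s‖ ≤ kappa ^ (u.card - 1) := by
      have := norm_QC_le (θ := θ) (u.erase j) s
      rwa [Finset.card_erase_of_mem hj] at this
    exact mul_le_mul (norm_cC1_le hθ j s) h1 (norm_nonneg _) (by norm_num)
  calc ∑ j ∈ u, ‖(∏ k ∈ u.erase j, cC θ k s) * cC1 θ j s‖
      ≤ ∑ j ∈ u, (3 * kappa ^ (u.card - 1)) := Finset.sum_le_sum hterm
    _ = u.card * (3 * kappa ^ (u.card - 1)) := by rw [Finset.sum_const, nsmul_eq_mul]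

end prodbounds

lemma kappa_pow_le (d m : ℕ) (h : d ≤ m + 2) : kappa ^ m ≤ kappa ^ d / kappa ^ 2 := by
  rw [le_div_iff₀ (pow_pos kappa_pos 2), ← pow_add]
  exact pow_le_pow_of_le_one kappa_pos.le kappa_le_one h

end SBU

open SBU in
set_option maxHeartbeats 1000000 in
theorem sup_bound_u_u_prime :
    ∃ C : ℝ, 0 < C ∧ ∀ (d : ℕ), 1 ≤ d → ∀ θ : EuclideanSpace ℝ (Fin d), ‖θ‖ = 1 →
      ∀ (b σ : ℝ), σ ∈ Set.Ioc (0 : ℝ) 1 →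
        (∀ t : ℝ, ‖deriv (uAux d θ b σ) t‖ ≤
          C * kappa ^ d * ((d : ℝ) ^ 2 + d * |b| + b ^ 2)) ∧
        (∀ t : ℝ, ‖(t : ℂ) * uAux d θ b σ t‖ ≤
          C * kappa ^ d * ((d + |b|) / σ)) := by
  refine ⟨100 / kappa ^ 2, by have := kappa_pos; positivity, ?_⟩
  intro d hd θ hθnorm b σ hσ
  obtain ⟨hσ0, hσ1⟩ := hσ
  -- coordinates are bounded by 1
  have hθ : ∀ i, |θ i| ≤ 1 := by
    intro i
    have hsum : ∑ j, θ j ^ 2 = 1 := by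
      have h := hθnorm
      rw [EuclideanSpace.norm_eq] at h
      have h2 : ∑ j, ‖θ j‖ ^ 2 = 1 := by
        have h3 := congrArg (fun x : ℝ => x ^ 2) h
        simp only [one_pow] at h3
        rwa [Real.sq_sqrt (Finset.sum_nonneg fun j _ => sq_nonneg ‖θ j‖)] at h3
      simpa [Real.norm_eq_abs, sq_abs] using h2
    have h1 : θ i ^ 2 ≤ 1 := by
      rw [← hsum]
      exact Finset.single_le_sum (fun j _ => sq_nonneg (θ j)) (Finset.mem_univ i)
    nlinarith [sq_abs (θ i), abs_nonneg (θ i)]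
  set θ' : Fin d → ℝ := fun i => θ i with hθ'
  -- uAux as explicit first derivative
  have hfun : (fun s : ℝ =>
      Complex.exp (-((σ ^ 2 * s ^ 2 / 2 : ℝ) : ℂ) - Complex.I * s * b) *
        ∏ i, ((Real.cos (s * θ i) * Real.sin (2 * s * θ i) : ℝ) : ℂ))
      = fun s => gC b σ s * PC θ' s := by
    funext s
    unfold gC PC cC pf
    congr 1
    exact Finset.prod_congr rfl fun i _ => by rw [mul_assoc]
  have uAux_eq : uAux d θ b σ = fun t => gC1 b σ t * PC θ' t + gC b σ t * PC1 θ' t := by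
    funext t
    unfold uAux
    rw [hfun]
    exact ((hasDerivAt_gC b σ t).mul (hasDerivAt_PC θ' t)).deriv
  -- abbreviation
  set M : ℝ := kappa ^ d / kappa ^ 2 with hM
  have hkp := kappa_pos
  have hM0 : 0 ≤ M := by positivity
  have hDnn : (0:ℝ) ≤ (d : ℝ) := Nat.cast_nonneg d
  have hk1 : kappa ^ d ≤ M := kappa_pow_le d d (by omega)
  have hk2 : kappa ^ (d - 1) ≤ M := kappa_pow_le d (d - 1) (by omega)
  have hk3 : kappa ^ (d - 2) ≤ M := kappa_pow_le d (d - 2) (by omega)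
  have hD1 : (1 : ℝ) ≤ (d : ℝ) := by exact_mod_cast hd
  have hB0 : (0 : ℝ) ≤ |b| := abs_nonneg b
  -- norm bounds for the product pieces
  have hPC : ∀ s, ‖PC θ' s‖ ≤ M := by
    intro s
    refine le_trans ?_ hk1
    have := norm_QC_le (θ := θ') Finset.univ s
    simpa [PC, QC, Finset.card_univ] using this
  have hPC1 : ∀ s, ‖PC1 θ' s‖ ≤ d * (3 * M) := by
    intro s
    have h := norm_QC1_le (θ := θ') hθ Finset.univ s
    have h2 : (Finset.univ : Finset (Fin d)).card = d := by simp
    rw [h2] at h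
    refine le_trans (by simpa [PC1, QC1] using h) ?_
    have : 3 * kappa ^ (d - 1) ≤ 3 * M := by linarith
    have hd0 : (0:ℝ) ≤ (d : ℝ) := Nat.cast_nonneg d
    exact mul_le_mul_of_nonneg_left this hd0
  have hPC2 : ∀ s, ‖PC2 θ' s‖ ≤ (d : ℝ) * ((d : ℝ) * (9 * M) + 9 * M) := by
    intro s
    unfold PC2
    refine (norm_sum_le _ _).trans ?_
    have hterm : ∀ i : Fin d, ‖QC1 θ' (Finset.univ.erase i) s * cC1 θ' i s +
        QC θ' (Finset.univ.erase i) s * cC2 θ' i s‖ ≤ (d : ℝ) * (9 * M) + 9 * M := by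
      intro i
      refine (norm_add_le _ _).trans ?_
      have hcard : (Finset.univ.erase i).card = d - 1 := by
        rw [Finset.card_erase_of_mem (Finset.mem_univ i)]; simp
      have h1 : ‖QC1 θ' (Finset.univ.erase i) s * cC1 θ' i s‖ ≤ (d : ℝ) * (9 * M) := by
        rw [norm_mul]
        have ha := norm_QC1_le (θ := θ') hθ (Finset.univ.erase i) s
        rw [hcard] at ha
        have hb' := norm_cC1_le (θ := θ') hθ i s
        have hstep : ‖QC1 θ' (Finset.univ.erase i) s‖ * ‖cC1 θ' i s‖ ≤
            ((d - 1 : ℕ) * (3 * kappa ^ (d - 1 - 1))) * 3 :=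
          mul_le_mul ha hb' (norm_nonneg _)
            (by positivity)
        
        refine hstep.trans ?_
        have hdd : ((d - 1 : ℕ) : ℝ) ≤ (d : ℝ) := by
          exact_mod_cast Nat.cast_le.mpr (Nat.sub_le d 1)
        have hkk : kappa ^ (d - 1 - 1) ≤ M := by
          have : d - 1 - 1 = d - 2 := by omega
          rw [this]; exact hk3
        have hknn : (0:ℝ) ≤ kappa ^ (d - 1 - 1) := by positivity
        calc ((d - 1 : ℕ) : ℝ) * (3 * kappa ^ (d - 1 - 1)) * 3
            ≤ (d : ℝ) * (3 * M) * 3 := by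
              apply mul_le_mul_of_nonneg_right _ (by norm_num)
              apply mul_le_mul hdd (by linarith) (by positivity) hDnn
          _ = (d : ℝ) * (9 * M) := by ring
      have h2 : ‖QC θ' (Finset.univ.erase i) s * cC2 θ' i s‖ ≤ 9 * M := by
        rw [norm_mul]
        have ha := norm_QC_le (θ := θ') (Finset.univ.erase i) s
        rw [hcard] at ha
        have hb' := norm_cC2_le (θ := θ') hθ i s
        calc ‖QC θ' (Finset.univ.erase i) s‖ * ‖cC2 θ' i s‖
            ≤ M * 9 := mul_le_mul (ha.trans hk2) hb' (norm_nonneg _) hM0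
          _ = 9 * M := by ring
      linarith
    calc ∑ i, ‖QC1 θ' (Finset.univ.erase i) s * cC1 θ' i s +
          QC θ' (Finset.univ.erase i) s * cC2 θ' i s‖
        ≤ ∑ _i : Fin d, ((d : ℝ) * (9 * M) + 9 * M) := Finset.sum_le_sum fun i _ => hterm i
      _ = (d : ℝ) * ((d : ℝ) * (9 * M) + 9 * M) := by
          rw [Finset.sum_const, nsmul_eq_mul, Finset.card_univ]; simp
  constructor
  · -- second derivative bound
    intro t
    have hderiv : deriv (uAux d θ b σ) t =
        gC2 b σ t * PC θ' t + gC1 b σ t * PC1 θ' t +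
          (gC1 b σ t * PC1 θ' t + gC b σ t * PC2 θ' t) := by
      rw [uAux_eq]
      exact (((hasDerivAt_gC1 b σ t).mul (hasDerivAt_PC θ' t)).add
        ((hasDerivAt_gC b σ t).mul (hasDerivAt_PC1 θ' t))).deriv
    rw [hderiv]
    have n2 := norm_gC2_le hσ0 hσ1 (b := b) t
    have n1 := norm_gC1_le hσ0 hσ1 (b := b) t
    have n0 := norm_gC_le_one (b := b) (σ := σ) t
    have key : ‖gC2 b σ t * PC θ' t + gC1 b σ t * PC1 θ' t +
          (gC1 b σ t * PC1 θ' t + gC b σ t * PC2 θ' t)‖ ≤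
        (5 + 2 * b ^ 2) * M + (1 + |b|) * ((d : ℝ) * (3 * M)) +
          ((1 + |b|) * ((d : ℝ) * (3 * M)) + 1 * ((d : ℝ) * ((d : ℝ) * (9 * M) + 9 * M))) := by
      refine (norm_add_le _ _).trans ?_
      have t1 : ‖gC2 b σ t * PC θ' t + gC1 b σ t * PC1 θ' t‖ ≤
          (5 + 2 * b ^ 2) * M + (1 + |b|) * ((d : ℝ) * (3 * M)) := by
        refine (norm_add_le _ _).trans ?_
        gcongr
        · rw [norm_mul]
          exact mul_le_mul n2 (hPC t) (norm_nonneg _) (by nlinarith [sq_nonneg b])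
        · rw [norm_mul]
          exact mul_le_mul n1 (hPC1 t) (norm_nonneg _) (by nlinarith)
      have t2 : ‖gC1 b σ t * PC1 θ' t + gC b σ t * PC2 θ' t‖ ≤
          (1 + |b|) * ((d : ℝ) * (3 * M)) + 1 * ((d : ℝ) * ((d : ℝ) * (9 * M) + 9 * M)) := by
        refine (norm_add_le _ _).trans ?_
        gcongr
        · rw [norm_mul]
          exact mul_le_mul n1 (hPC1 t) (norm_nonneg _) (by nlinarith)
        · rw [norm_mul]
          exact mul_le_mul n0 (hPC2 t) (norm_nonneg _) (by norm_num)
      linarith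
    refine key.trans ?_
    have hCeq : 100 / kappa ^ 2 * kappa ^ d * ((d : ℝ) ^ 2 + d * |b| + b ^ 2) =
        100 * M * ((d : ℝ) ^ 2 + d * |b| + b ^ 2) := by
      rw [hM]; ring
    rw [hCeq]
    have efac : (5 + 2 * b ^ 2) * M + (1 + |b|) * ((d : ℝ) * (3 * M)) +
          ((1 + |b|) * ((d : ℝ) * (3 * M)) + 1 * ((d : ℝ) * ((d : ℝ) * (9 * M) + 9 * M))) =
        M * (5 + 2 * b ^ 2 + 6 * (d : ℝ) * (1 + |b|) + 9 * (d : ℝ) ^ 2 + 9 * (d : ℝ)) := by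
      ring
    have scalar : 5 + 2 * b ^ 2 + 6 * (d : ℝ) * (1 + |b|) + 9 * (d : ℝ) ^ 2 + 9 * (d : ℝ) ≤
        100 * ((d : ℝ) ^ 2 + (d : ℝ) * |b| + b ^ 2) := by
      nlinarith [hD1, hB0, sq_nonneg b, mul_nonneg hB0 (sub_nonneg.mpr hD1), sq_abs b]
    calc (5 + 2 * b ^ 2) * M + (1 + |b|) * ((d : ℝ) * (3 * M)) +
          ((1 + |b|) * ((d : ℝ) * (3 * M)) + 1 * ((d : ℝ) * ((d : ℝ) * (9 * M) + 9 * M)))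
        = M * (5 + 2 * b ^ 2 + 6 * (d : ℝ) * (1 + |b|) + 9 * (d : ℝ) ^ 2 + 9 * (d : ℝ)) := efac
      _ ≤ M * (100 * ((d : ℝ) ^ 2 + (d : ℝ) * |b| + b ^ 2)) :=
          mul_le_mul_of_nonneg_left scalar hM0
      _ = 100 * M * ((d : ℝ) ^ 2 + (d : ℝ) * |b| + b ^ 2) := by ring
  · -- bound on t * u(t)
    intro t
    rw [uAux_eq]
    have hnt : ‖(t : ℂ)‖ = |t| := by
      rw [Complex.norm_real, Real.norm_eq_abs]
    have key : ‖(t : ℂ) * (gC1 b σ t * PC θ' t + gC b σ t * PC1 θ' t)‖ ≤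
        (2 + |b| / σ) * M + (1 / σ) * ((d : ℝ) * (3 * M)) := by
      rw [norm_mul, hnt]
      refine le_trans (mul_le_mul_of_nonneg_left (norm_add_le _ _) (abs_nonneg t)) ?_
      rw [mul_add]
      have e1 : |t| * ‖gC1 b σ t * PC θ' t‖ ≤ (2 + |b| / σ) * M := by
        rw [norm_mul, ← mul_assoc]
        have ha := norm_t_gC1_le hσ0 hσ1 (b := b) t
        exact mul_le_mul ha (hPC t) (norm_nonneg _)
          (by positivity)
      have e2 : |t| * ‖gC b σ t * PC1 θ' t‖ ≤ (1 / σ) * ((d : ℝ) * (3 * M)) := by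
        rw [norm_mul, ← mul_assoc]
        have ha := norm_t_gC_le hσ0 hσ1 (b := b) t
        exact mul_le_mul ha (hPC1 t) (norm_nonneg _) (by positivity)
      linarith
    refine key.trans ?_
    have hCeq : 100 / kappa ^ 2 * kappa ^ d * (((d : ℝ) + |b|) / σ) =
        100 * M * (((d : ℝ) + |b|) / σ) := by
      rw [hM]; ring
    rw [hCeq]
    have e1 : (2 + |b| / σ) * M + 1 / σ * ((d : ℝ) * (3 * M)) =
        (M * (2 * σ + |b| + 3 * d)) / σ := by
      field_simp
    have e2 : 100 * M * (((d : ℝ) + |b|) / σ) = (100 * M * ((d : ℝ) + |b|)) / σ := by ring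
    rw [e1, e2, div_le_div_iff₀ hσ0 hσ0]
    have scalar2 : 2 * σ + |b| + 3 * (d : ℝ) ≤ 100 * ((d : ℝ) + |b|) := by nlinarith
    have base : M * (2 * σ + |b| + 3 * (d : ℝ)) ≤ M * (100 * ((d : ℝ) + |b|)) :=
      mul_le_mul_of_nonneg_left scalar2 hM0
    have : M * (2 * σ + |b| + 3 * (d : ℝ)) ≤ 100 * M * ((d : ℝ) + |b|) := by linarith
    nlinarith [mul_le_mul_of_nonneg_right this hσ0.le]

end

-- check
-- #print axioms sup_bound_u_u_prime
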